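/- arXiv:0802.2816 — 4 statements merged into one kernel-verified Lean document; each statement's English description precedes it below -/
import Mathlib

section
/- Let $m, c > 0$ and let $f : \mathbb{R} \to \mathbb{R}$ be continuous. If $q : [0,T) \to \mathbb{R}$ is a $C^2$ maximal solution of $m\ddot q = -c\,\dot q/q + m f$ with $q(0) = q_0 > 0$, then $q(t) > 0$ for all $t \in [0,T)$; i.e., the particle governed by the first-order lubrication model never touches the plane in finite time. -/
/-- Lubrication model: a maximal solution of `m q'' = -c q'/q + m f` with `q 0 = q0 > 0`
never touches the plane in finite time. -/
theorem stmt0 (m c T q0 : ℝ) (hm : 0 < m) (hc : 0 < c) (hT : 0 < T)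
    (f : ℝ → ℝ) (hf : Continuous f) (q : ℝ → ℝ)
    (hq2 : ContDiffOn ℝ 2 q (Set.Ico 0 T))
    (hode : ∀ t ∈ Set.Ico (0:ℝ) T,
      m * deriv (deriv q) t = -c * deriv q t / q t + m * f t)
    (hq0 : q 0 = q0) (hq0pos : 0 < q0)
    (hmax : ¬ ∃ (T' : ℝ) (p : ℝ → ℝ), T < T' ∧
      ContDiffOn ℝ 2 p (Set.Ico 0 T') ∧
      (∀ t ∈ Set.Ico (0:ℝ) T, p t = q t) ∧
      (∀ t ∈ Set.Ico (0:ℝ) T', 0 < p t ∧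
        m * deriv (deriv p) t = -c * deriv p t / p t + m * f t)) :
    ∀ t ∈ Set.Ico (0:ℝ) T, 0 < q t := by
  intro t ht
  by_contra hneg
  push_neg at hneg
  have hqc : ContinuousOn q (Set.Ico 0 T) := hq2.continuousOn
  have ht0 : 0 ≤ t := ht.1
  have htT : t < T := ht.2
  -- zero set
  have hsub1 : Set.Icc (0:ℝ) t ⊆ Set.Ico 0 T := fun x hx => ⟨hx.1, lt_of_le_of_lt hx.2 htT⟩
  have hzne : (Set.Icc (0:ℝ) t ∩ q ⁻¹' {0}).Nonempty := by
    have h0 : (0:ℝ) ∈ Set.Icc (q t) (q 0) := by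
      constructor
      · exact hneg
      · rw [hq0]; exact le_of_lt hq0pos
    have := intermediate_value_Icc' ht0 (hqc.mono hsub1) h0
    obtain ⟨z, hz, hz0⟩ := this
    exact ⟨z, hz, by simpa using hz0⟩
  have hZcl : IsClosed (Set.Icc (0:ℝ) t ∩ q ⁻¹' {0}) :=
    (hqc.mono hsub1).preimage_isClosed_of_isClosed isClosed_Icc isClosed_singleton
  set τ := sInf (Set.Icc (0:ℝ) t ∩ q ⁻¹' {0}) with hτdef
  have hτZ : τ ∈ Set.Icc (0:ℝ) t ∩ q ⁻¹' {0} :=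
    hZcl.csInf_mem hzne ⟨0, fun x hx => hx.1.1⟩
  have hτ0 : q τ = 0 := hτZ.2
  have hτt : τ ≤ t := hτZ.1.2
  have hτT : τ < T := lt_of_le_of_lt hτt htT
  have hτnn : 0 ≤ τ := hτZ.1.1
  have hτpos : 0 < τ := by
    rcases lt_or_eq_of_le hτnn with h | h
    · exact h
    · exfalso; rw [← h] at hτ0; rw [hq0] at hτ0; linarith
  -- q positive before τ
  have hpos : ∀ s, 0 ≤ s → s < τ → 0 < q s := by
    intro s hs0 hsτ
    by_contra hqs
    push_neg at hqs
    have hsub2 : Set.Icc (0:ℝ) s ⊆ Set.Ico 0 T :=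
      fun x hx => ⟨hx.1, lt_of_le_of_lt hx.2 (lt_trans hsτ hτT)⟩
    have h0 : (0:ℝ) ∈ Set.Icc (q s) (q 0) := ⟨hqs, by rw [hq0]; exact le_of_lt hq0pos⟩
    obtain ⟨z, hz, hz0⟩ := intermediate_value_Icc' hs0 (hqc.mono hsub2) h0
    have hzZ : z ∈ Set.Icc (0:ℝ) t ∩ q ⁻¹' {0} :=
      ⟨⟨hz.1, le_trans hz.2 (le_trans (le_of_lt hsτ) hτt)⟩, by simpa using hz0⟩
    have : τ ≤ z := csInf_le ⟨0, fun x hx => hx.1.1⟩ hzZ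
    linarith [hz.2]
  -- setup for the ODE integration
  set F : ℝ → ℝ := fun u => ∫ s in (0:ℝ)..u, f s with hFdef
  have hFc : Continuous F :=
    intervalIntegral.continuous_primitive (fun a b => hf.intervalIntegrable a b) 0
  set g : ℝ → ℝ := fun u => m * deriv q u + c * Real.log (q u) - m * F u with hgdef
  have hIooT : IsOpen (Set.Ioo (0:ℝ) T) := isOpen_Ioo
  have h2 : ContDiffOn ℝ 2 q (Set.Ioo 0 T) := hq2.mono Set.Ioo_subset_Ico_self
  have hgderiv : ∀ x ∈ Set.Ioo 0 τ, HasDerivAt g 0 x := by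
    intro x hx
    have hxT : x ∈ Set.Ioo (0:ℝ) T := ⟨hx.1, lt_trans hx.2 hτT⟩
    have hqx : 0 < q x := hpos x (le_of_lt hx.1) hx.2
    have hq' : HasDerivAt q (deriv q x) x :=
      ((h2.differentiableOn (by norm_num)).differentiableAt (hIooT.mem_nhds hxT)).hasDerivAt
    have hdq : ContDiffOn ℝ 1 (deriv q) (Set.Ioo 0 T) :=
      h2.deriv_of_isOpen hIooT (by norm_num)
    have hq'' : HasDerivAt (deriv q) (deriv (deriv q) x) x :=
      ((hdq.differentiableOn (by norm_num)).differentiableAt (hIooT.mem_nhds hxT)).hasDerivAt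
    have hlog : HasDerivAt (fun y => Real.log (q y)) ((q x)⁻¹ * deriv q x) x :=
      (Real.hasDerivAt_log (ne_of_gt hqx)).comp x hq'
    have hF' : HasDerivAt F (f x) x :=
      intervalIntegral.integral_hasDerivAt_right (hf.intervalIntegrable 0 x)
        hf.aestronglyMeasurable.stronglyMeasurableAtFilter hf.continuousAt
    have hg : HasDerivAt g
        (m * deriv (deriv q) x + c * ((q x)⁻¹ * deriv q x) - m * f x) x :=
      ((hq''.const_mul m).add (hlog.const_mul c)).sub (hF'.const_mul m)
    have hz : m * deriv (deriv q) x + c * ((q x)⁻¹ * deriv q x) - m * f x = 0 := by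
      rw [hode x ⟨le_of_lt hx.1, hxT.2⟩]
      field_simp
      ring
    rwa [hz] at hg
  -- constancy of g on (0, τ)
  set a := τ / 2 with hadef
  have ha0 : 0 < a := by positivity
  have haτ : a < τ := by linarith
  have key : ∀ s ∈ Set.Ico a τ, g s = g a := by
    intro s hs
    rcases eq_or_lt_of_le hs.1 with h | h
    · rw [← h]
    · have hcont : ContinuousOn g (Set.Icc a s) := by
        intro x hx
        have : x ∈ Set.Ioo (0:ℝ) τ := ⟨lt_of_lt_of_le ha0 hx.1, lt_of_le_of_lt hx.2 hs.2⟩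
        exact ((hgderiv x this).differentiableAt.continuousAt).continuousWithinAt
      have hderivs : ∀ x ∈ Set.Ico a s, HasDerivWithinAt g 0 (Set.Ici x) x := by
        intro x hx
        have : x ∈ Set.Ioo (0:ℝ) τ := ⟨lt_of_lt_of_le ha0 hx.1, lt_trans hx.2 hs.2⟩
        exact (hgderiv x this).hasDerivWithinAt
      exact constant_of_has_deriv_right_zero hcont hderivs s ⟨hs.1, le_rfl⟩
  -- bound on F
  obtain ⟨C, hC⟩ := (isCompact_Icc (a := (0:ℝ)) (b := τ)).exists_bound_of_continuousOn
    hFc.continuousOn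
  -- continuity of q at τ within [0, τ]
  have hqτc : ContinuousWithinAt q (Set.Icc 0 τ) τ := by
    have hsub3 : Set.Icc (0:ℝ) τ ⊆ Set.Ico 0 T := fun x hx => ⟨hx.1, lt_of_le_of_lt hx.2 hτT⟩
    exact (hqc.mono hsub3).continuousWithinAt ⟨hτnn, le_rfl⟩
  set ε := Real.exp ((g a - m * C - c) / c) with hεdef
  have hεpos : 0 < ε := Real.exp_pos _
  obtain ⟨δ, hδpos, hδ⟩ := Metric.continuousWithinAt_iff.mp hqτc ε hεpos
  set l := max a (τ - δ) with hldef
  have hlτ : l < τ := max_lt haτ (by linarith)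
  set l' := (l + τ) / 2 with hl'def
  have hll' : l < l' := by simp only [hl'def]; linarith
  have hl'τ : l' < τ := by simp only [hl'def]; linarith
  have hl'0 : 0 < l' := lt_trans (lt_of_lt_of_le ha0 (le_max_left _ _)) hll'
  -- derivative of q is positive on (l', τ)
  have hderivpos : ∀ x ∈ Set.Ioo l' τ, 0 < deriv q x := by
    intro x hx
    have hxa : a ≤ x := le_of_lt (lt_of_le_of_lt (le_max_left a (τ - δ)) (lt_of_lt_of_le hll' (le_of_lt hx.1)))
    have hxτ : x < τ := hx.2
    have hgx : g x = g a := key x ⟨hxa, hxτ⟩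
    have hqx : 0 < q x := hpos x (by linarith [hl'0, hx.1]) hxτ
    have hxmem : x ∈ Set.Icc (0:ℝ) τ := ⟨by linarith [hl'0, hx.1], le_of_lt hxτ⟩
    have hdist : dist x τ < δ := by
      rw [Real.dist_eq, abs_of_nonpos (by linarith)]
      have : τ - δ ≤ l := le_max_right _ _
      have : τ - δ < x := lt_of_le_of_lt this (lt_trans hll' hx.1)
      linarith
    have hqxε : q x < ε := by
      have := hδ hxmem hdist
      rw [Real.dist_eq, hτ0, sub_zero, abs_of_pos hqx] at this
      exact this
    have hlog : Real.log (q x) < (g a - m * C - c) / c := by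
      calc Real.log (q x) < Real.log ε := Real.log_lt_log hqx hqxε
        _ = (g a - m * C - c) / c := Real.log_exp _
    have hclog : c * Real.log (q x) < g a - m * C - c := by
      have := (mul_lt_mul_iff_right₀ hc).mpr hlog
      rwa [mul_div_cancel₀ _ (ne_of_gt hc)] at this
    have hFx : -C ≤ F x := by
      have := hC x hxmem
      rw [Real.norm_eq_abs] at this
      linarith [abs_le.mp this |>.1]
    have hmFx : -(m * C) ≤ m * F x := by nlinarith
    have hgx' : m * deriv q x + c * Real.log (q x) - m * F x = g a := hgx
    have hmd : 0 < m * deriv q x := by linarith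
    rcases mul_pos_iff.mp hmd with ⟨_, h⟩ | ⟨h, _⟩
    · exact h
    · linarith
  -- q strictly increasing on [l', τ], contradiction with q τ = 0
  have hcontq : ContinuousOn q (Set.Icc l' τ) := by
    apply hqc.mono
    intro x hx
    exact ⟨le_of_lt (lt_of_lt_of_le hl'0 hx.1), lt_of_le_of_lt hx.2 hτT⟩
  have hmono : StrictMonoOn q (Set.Icc l' τ) := by
    apply strictMonoOn_of_deriv_pos (convex_Icc l' τ) hcontq
    intro x hx
    rw [interior_Icc] at hx
    exact hderivpos x hx
  have h1 : q l' < q τ :=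
    hmono ⟨le_rfl, le_of_lt hl'τ⟩ ⟨le_of_lt hl'τ, le_rfl⟩ hl'τ
  have h2 : 0 < q l' := hpos l' (le_of_lt hl'0) hl'τ
  rw [hτ0] at h1
  linarith
end

section
/- Consider the discrete gluey scheme: $u^{n+1/2} = u^n + h f^n$, and $u^{n+1}$ is the projection of $u^{n+1/2}$ onto $K(q^n,\gamma^n)$ where $K(q,\gamma) = \{v : q+hv \ge 0\}$ if $\gamma = 0$ and $\{v : q + hv = 0\}$ if $\gamma < 0$, with the unsticking modification replacing $u^{n+1}$ by $\bar\gamma^{n+1}/m$ when $\bar\gamma^{n+1} > 0$. Then for every $n$, $|u^{n+1}| \le |u^0| + \sum_{k=0}^{n} h|f^k|$. In particular, if $h\sum_k |f^k| \le \|f\|_{L^1}$, the discrete velocities are bounded by $|u^0| + \|f\|_{L^1(0,T)}$ uniformly in $h$. -/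
noncomputable section

/-- Discrete set of admissible velocities for the particle/plane gluey scheme. -/
def Kset (q γ h : ℝ) : Set ℝ :=
  if γ = 0 then {v | 0 ≤ q + h * v} else {v | q + h * v = 0}

/-- The particle/plane gluey algorithm: a priori velocity `u n + h f n`, projection onto
`Kset (q n) (γ n) h` giving `ubar (n+1)` and multiplier `lam (n+1)`, update of `γ`
with unsticking modification, and update of the position `q`. -/
structure GlueyScheme (m h : ℝ) where
  q : ℕ → ℝ
  u : ℕ → ℝ
  γ : ℕ → ℝ
  ubar : ℕ → ℝ
  γbar : ℕ → ℝ
  lam : ℕ → ℝ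
  f : ℕ → ℝ
  hm : 0 < m
  hh : 0 < h
  q0pos : 0 < q 0
  γ0 : γ 0 = 0
  lam0 : lam 0 = 0
  proj_mem : ∀ n, ubar (n + 1) ∈ Kset (q n) (γ n) h
  proj_min : ∀ n, ∀ v ∈ Kset (q n) (γ n) h,
    |ubar (n + 1) - (u n + h * f n)| ≤ |v - (u n + h * f n)|
  lam_def : ∀ n, m * (ubar (n + 1) - (u n + h * f n)) = h * lam (n + 1)
  γbar_def : ∀ n, γbar (n + 1) = γ n - h * lam (n + 1)
  unstick_le : ∀ n, γbar (n + 1) ≤ 0 → u (n + 1) = ubar (n + 1) ∧ γ (n + 1) = γbar (n + 1)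
  unstick_gt : ∀ n, 0 < γbar (n + 1) → u (n + 1) = γbar (n + 1) / m ∧ γ (n + 1) = 0
  q_update : ∀ n, q (n + 1) = q n + h * u (n + 1)

/-- Uniform bound on the discrete velocities:
`|u^{n+1}| ≤ |u^0| + ∑_{k=0}^{n} h |f^k|`. -/
theorem stmt3 (m h : ℝ) (S : GlueyScheme m h) :
    ∀ n : ℕ, |S.u (n + 1)| ≤ |S.u 0| + ∑ k ∈ Finset.range (n + 1), h * |S.f k| := by
  have hm := S.hm
  have hh := S.hh
  have step : ∀ n, ((S.γ n = 0 ∧ 0 ≤ S.q n) ∨ (S.γ n < 0 ∧ S.q n = 0)) →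
      (((S.γ (n+1) = 0 ∧ 0 ≤ S.q (n+1)) ∨ (S.γ (n+1) < 0 ∧ S.q (n+1) = 0)) ∧
        |S.u (n+1)| ≤ |S.u n + h * S.f n|) := by
    intro n hinv
    set w := S.u n + h * S.f n with hw
    rcases hinv with ⟨hγ, hq⟩ | ⟨hγ, hq⟩
    · -- sticking multiplier zero: K is a half line
      have hK : Kset (S.q n) (S.γ n) h = {v | 0 ≤ S.q n + h * v} := by
        simp [Kset, hγ]
      set a := -(S.q n) / h with ha
      have hha : h * a = -(S.q n) := by
        rw [ha]; field_simp
      have ha0 : a ≤ 0 := div_nonpos_of_nonpos_of_nonneg (by linarith) hh.le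
      have hmemmax : max w a ∈ Kset (S.q n) (S.γ n) h := by
        rw [hK]
        have h1 : a ≤ max w a := le_max_right _ _
        have h2 : h * a ≤ h * max w a := by nlinarith
        simp only [Set.mem_setOf_eq]; linarith
      have hmem := S.proj_mem n
      rw [hK] at hmem
      simp only [Set.mem_setOf_eq] at hmem
      have habar : a ≤ S.ubar (n+1) := by
        rw [ha, div_le_iff₀ hh]
        nlinarith
      have hmin := S.proj_min n (max w a) hmemmax
      rw [← hw] at hmin
      have hubar : S.ubar (n+1) = max w a := by
        rcases le_total a w with hcase | hcase
        · rw [max_eq_left hcase] at hmin ⊢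
          simp only [sub_self, abs_zero] at hmin
          have h1 := abs_nonneg (S.ubar (n+1) - w)
          have h2 : |S.ubar (n+1) - w| = 0 := le_antisymm hmin h1
          have := abs_eq_zero.mp h2
          linarith
        · rw [max_eq_right hcase] at hmin ⊢
          have h1 : S.ubar (n+1) - w ≤ |a - w| := le_trans (le_abs_self _) hmin
          rw [abs_of_nonneg (by linarith : (0:ℝ) ≤ a - w)] at h1
          linarith
      have hwle : w ≤ S.ubar (n+1) := by rw [hubar]; exact le_max_left _ _
      have hγbar : S.γbar (n+1) = -(m * (S.ubar (n+1) - w)) := by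
        rw [S.γbar_def n, hγ, ← S.lam_def n, ← hw]; ring
      have hγbar0 : S.γbar (n+1) ≤ 0 := by nlinarith
      obtain ⟨hu1, hγ1⟩ := S.unstick_le n hγbar0
      constructor
      · rcases lt_or_eq_of_le hγbar0 with hlt | heq
        · right
          refine ⟨by rw [hγ1]; exact hlt, ?_⟩
          have hne : S.ubar (n+1) ≠ w := by
            intro hcontra
            rw [hcontra] at hγbar; simp at hγbar; rw [hγbar] at hlt; linarith
          have : S.ubar (n+1) = a := by
            rw [hubar] at hne ⊢
            rcases le_total a w with hcase | hcase
            · exact absurd (max_eq_left hcase) hne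
            · exact max_eq_right hcase
          rw [S.q_update n, hu1, this, hha]; ring
        · left
          refine ⟨by rw [hγ1, ← heq], ?_⟩
          rw [S.q_update n, hu1]
          have : h * a ≤ h * S.ubar (n+1) := by nlinarith
          linarith
      · rw [hu1, hubar]
        rcases le_total a w with hcase | hcase
        · rw [max_eq_left hcase]
        · rw [max_eq_right hcase]
          have hw0 : w ≤ 0 := le_trans hcase ha0
          rw [abs_of_nonpos ha0, abs_of_nonpos hw0]
          linarith
    · -- stuck: K is a singleton
      have hK : Kset (S.q n) (S.γ n) h = {v | S.q n + h * v = 0} := by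
        simp [Kset, ne_of_lt hγ]
      have hmem := S.proj_mem n
      rw [hK] at hmem
      simp only [Set.mem_setOf_eq] at hmem
      have hubar : S.ubar (n+1) = 0 := by
        rw [hq] at hmem
        have : h * S.ubar (n+1) = 0 := by linarith
        rcases mul_eq_zero.mp this with h' | h'
        · linarith
        · exact h'
      have hγbar : S.γbar (n+1) = S.γ n + m * w := by
        rw [S.γbar_def n, ← S.lam_def n, ← hw, hubar]; ring
      rcases le_or_gt (S.γbar (n+1)) 0 with hle | hgt
      · obtain ⟨hu1, hγ1⟩ := S.unstick_le n hle
        have hu0 : S.u (n+1) = 0 := by rw [hu1, hubar]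
        have hq1 : S.q (n+1) = 0 := by rw [S.q_update n, hu0, hq]; ring
        constructor
        · rcases lt_or_eq_of_le hle with hlt | heq
          · right; exact ⟨by rw [hγ1]; exact hlt, hq1⟩
          · left; exact ⟨by rw [hγ1, ← heq], by rw [hq1]⟩
        · rw [hu0]; simp [abs_nonneg]
      · obtain ⟨hu1, hγ1⟩ := S.unstick_gt n hgt
        have hupos : 0 < S.u (n+1) := by
          rw [hu1]; exact div_pos hgt hm
        have hmu : m * S.u (n+1) = S.γbar (n+1) := by
          rw [hu1]; field_simp
        have huw : S.u (n+1) ≤ w := by nlinarith [hγbar, hmu]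
        constructor
        · left
          refine ⟨hγ1, ?_⟩
          rw [S.q_update n, hq]
          nlinarith
        · rw [abs_of_pos hupos]
          exact le_trans huw (le_abs_self w)
  have inv : ∀ n, ((S.γ n = 0 ∧ 0 ≤ S.q n) ∨ (S.γ n < 0 ∧ S.q n = 0)) := by
    intro n
    induction n with
    | zero => exact Or.inl ⟨S.γ0, S.q0pos.le⟩
    | succ k ih => exact (step k ih).1
  have bound : ∀ n, |S.u (n+1)| ≤ |S.u n| + h * |S.f n| := by
    intro n
    have h1 := (step n (inv n)).2
    have h2 : |S.u n + h * S.f n| ≤ |S.u n| + |h * S.f n| := abs_add_le _ _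
    have h3 : |h * S.f n| = h * |S.f n| := by
      rw [abs_mul, abs_of_pos hh]
    linarith
  intro n
  induction n with
  | zero => simpa using bound 0
  | succ k ih =>
    rw [Finset.sum_range_succ]
    have := bound (k+1)
    linarith
end
end

section
/- In the discrete gluey scheme, the modified Lagrange multiplier $\tilde\lambda^{n+1} := -(\gamma^{n+1}-\gamma^n)/h$ satisfies the discrete Fundamental Principle of Dynamics: $m(u^{n+1}-u^n)/h = m f^n + \tilde\lambda^{n+1}$ for all $n \ge 0$, both in the case without unsticking (where $\tilde\lambda^{n+1} = \lambda^{n+1}$) and in the case with unsticking (where $u^{n+1} = \bar\gamma^{n+1}/m$ and $\gamma^{n+1}=0$). -/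
noncomputable section

/-- If the glue variable vanishes at step `n`, then the projected velocity is at least the
a priori velocity, hence the multiplier is nonnegative and `γ̄^{n+1} ≤ 0`: no unsticking. -/
lemma gbar_nonpos_of_gamma_zero (m h : ℝ) (S : GlueyScheme m h) (n : ℕ)
    (hγ : S.γ n = 0) : S.γbar (n + 1) ≤ 0 := by
  set w := S.u n + h * S.f n with hw
  have hmem := S.proj_mem n
  rw [Kset, if_pos hγ] at hmem
  have hub : w ≤ S.ubar (n + 1) := by
    by_cases hwK : 0 ≤ S.q n + h * w
    · have := S.proj_min n w (by rw [Kset, if_pos hγ]; exact hwK)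
      have : |S.ubar (n + 1) - w| ≤ 0 := by simpa [hw] using this
      have : S.ubar (n + 1) = w := by
        have := abs_nonpos_iff.mp this; linarith
      linarith
    · push_neg at hwK
      have h1 : h * w < h * S.ubar (n + 1) := by
        have : 0 ≤ S.q n + h * S.ubar (n + 1) := hmem
        linarith
      nlinarith [S.hh]
  have hlam : 0 ≤ S.lam (n + 1) := by
    have := S.lam_def n
    nlinarith [S.hm, S.hh]
  have := S.γbar_def n
  nlinarith [S.hh]

/-- Invariant: if the glue variable is nonzero, the particle is on the plane. -/
lemma q_zero_of_gamma_ne (m h : ℝ) (S : GlueyScheme m h) :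
    ∀ n, S.γ n ≠ 0 → S.q n = 0 := by
  intro n
  induction n with
  | zero => intro hc; exact absurd S.γ0 hc
  | succ n _ =>
    intro hγ1
    rcases le_or_gt (S.γbar (n + 1)) 0 with hle | hgt
    · obtain ⟨hu, hγ⟩ := S.unstick_le n hle
      by_cases hγn : S.γ n = 0
      · -- γ n = 0: γbar = -h λ; γ(n+1) = γbar ≠ 0 forces λ > 0, i.e. ubar > w,
        -- which forces the projection to be on the boundary.
        set w := S.u n + h * S.f n with hw
        have hγbne : S.γbar (n + 1) ≠ 0 := by rw [← hγ]; exact hγ1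
        have hγblt : S.γbar (n + 1) < 0 := lt_of_le_of_ne hle hγbne
        have hlampos : 0 < S.lam (n + 1) := by
          have := S.γbar_def n
          nlinarith [S.hh]
        have hubgt : w < S.ubar (n + 1) := by
          have := S.lam_def n
          nlinarith [S.hm, S.hh]
        have hmem := S.proj_mem n
        rw [Kset, if_pos hγn] at hmem
        have hwK : S.q n + h * w < 0 := by
          by_contra hc
          push_neg at hc
          have := S.proj_min n w (by rw [Kset, if_pos hγn]; exact hc)
          have : |S.ubar (n + 1) - w| ≤ 0 := by simpa [hw] using this
          have := abs_nonpos_iff.mp this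
          linarith
        -- candidate v = -q/h lies in K
        have hvK : (0:ℝ) ≤ S.q n + h * (-(S.q n) / h) := by
          rw [mul_div_cancel₀ _ (ne_of_gt S.hh)]; simp
        have hmin := S.proj_min n (-(S.q n) / h) (by rw [Kset, if_pos hγn]; exact hvK)
        have hvgt : w < -(S.q n) / h := by
          rw [lt_div_iff₀ S.hh] at *
          nlinarith [S.hh]
        have h2 : S.ubar (n + 1) - w ≤ -(S.q n) / h - w := by
          rw [abs_of_pos (by linarith), abs_of_pos (by linarith)] at hmin
          exact hmin
        have h3 : S.q n + h * S.ubar (n + 1) ≤ 0 := by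
          have : S.ubar (n + 1) ≤ -(S.q n) / h := by linarith
          have := (le_div_iff₀ S.hh).mp this
          nlinarith [S.hh]
        have h4 : S.q n + h * S.ubar (n + 1) = 0 := le_antisymm h3 hmem
        rw [S.q_update n, hu, h4]
      · -- γ n ≠ 0 : K is the singleton constraint q n + h v = 0
        have hmem := S.proj_mem n
        rw [Kset, if_neg hγn] at hmem
        rw [S.q_update n, hu]
        exact hmem
    · obtain ⟨_, hγ⟩ := S.unstick_gt n hgt
      exact absurd hγ hγ1

/-- Discrete Fundamental Principle of Dynamics: with the modified multiplier
`λ̃^{n+1} = -(γ^{n+1} - γ^n)/h`, one has `m (u^{n+1} - u^n)/h = m f^n + λ̃^{n+1}`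
for all `n`, in both the unsticking and non-unsticking cases. -/
theorem stmt4 (m h : ℝ) (S : GlueyScheme m h) :
    ∀ n : ℕ,
      m * (S.u (n + 1) - S.u n) / h = m * S.f n + (-(S.γ (n + 1) - S.γ n) / h) ∧
      (S.γbar (n + 1) ≤ 0 → -(S.γ (n + 1) - S.γ n) / h = S.lam (n + 1)) := by
  intro n
  have hh := S.hh
  have hm := S.hm
  have hlam := S.lam_def n
  have hgb := S.γbar_def n
  rcases le_or_gt (S.γbar (n + 1)) 0 with hle | hgt
  · obtain ⟨hu, hγ⟩ := S.unstick_le n hle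
    constructor
    · have goal' : m * (S.u (n + 1) - S.u n) =
          m * S.f n * h + -(S.γ (n + 1) - S.γ n) := by
        rw [hu, hγ, hgb]; linear_combination hlam
      calc m * (S.u (n + 1) - S.u n) / h
          = (m * S.f n * h + -(S.γ (n + 1) - S.γ n)) / h := by rw [goal']
        _ = m * S.f n + -(S.γ (n + 1) - S.γ n) / h := by
            rw [add_div, mul_div_cancel_right₀ _ (ne_of_gt hh)]
    · intro _
      rw [hγ, hgb]
      field_simp
      ring
  · obtain ⟨hu, hγ⟩ := S.unstick_gt n hgt
    -- unsticking: γ n ≠ 0 (else γbar ≤ 0), hence q n = 0 and ubar (n+1) = 0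
    have hγn : S.γ n ≠ 0 := by
      intro hc
      have := gbar_nonpos_of_gamma_zero m h S n hc
      linarith
    have hq : S.q n = 0 := q_zero_of_gamma_ne m h S n hγn
    have hmem := S.proj_mem n
    rw [Kset, if_neg hγn] at hmem
    simp only [Set.mem_setOf_eq, hq, zero_add] at hmem
    have hub : S.ubar (n + 1) = 0 := by
      rcases mul_eq_zero.mp hmem with h1 | h1
      · exact absurd h1 (ne_of_gt hh)
      · exact h1
    rw [hub] at hlam
    constructor
    · have hu' : m * S.u (n + 1) = S.γ n - h * S.lam (n + 1) := by
        rw [hu, hgb, mul_div_cancel₀ _ (ne_of_gt hm)]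
      have goal' : m * (S.u (n + 1) - S.u n) =
          m * S.f n * h + -(S.γ (n + 1) - S.γ n) := by
        rw [hγ]; linear_combination hu' + hlam
      calc m * (S.u (n + 1) - S.u n) / h
          = (m * S.f n * h + -(S.γ (n + 1) - S.γ n)) / h := by rw [goal']
        _ = m * S.f n + -(S.γ (n + 1) - S.γ n) / h := by
            rw [add_div, mul_div_cancel_right₀ _ (ne_of_gt hh)]
    · intro hc; linarith

end
end

section
/- In the discrete gluey scheme, $\gamma^n \le 0$ and $q^n \ge 0$ for all $n$, and moreover $q^n \gamma^n = 0$ for all $n \ge 1$: at every time step either the computed distance or the computed adhesion potential vanishes. -/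
noncomputable section

/-- In the discrete gluey scheme, `γ^n ≤ 0` and `q^n ≥ 0` for all `n`, and
`q^n γ^n = 0` for all `n ≥ 1`. -/
theorem stmt5 (m h : ℝ) (S : GlueyScheme m h) :
    (∀ n : ℕ, S.γ n ≤ 0 ∧ 0 ≤ S.q n) ∧ (∀ n : ℕ, 1 ≤ n → S.q n * S.γ n = 0) := by
  have hh := S.hh
  have hm := S.hm
  have hγ : ∀ n, S.γ n ≤ 0 := by
    intro n
    cases n with
    | zero => rw [S.γ0]
    | succ k =>
      rcases le_or_gt (S.γbar (k+1)) 0 with hle | hgt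
      · rw [(S.unstick_le k hle).2]; exact hle
      · rw [(S.unstick_gt k hgt).2]
  have main : ∀ n, 0 ≤ S.q n ∧ (1 ≤ n → S.q n * S.γ n = 0) := by
    intro n
    induction n with
    | zero => exact ⟨le_of_lt S.q0pos, by omega⟩
    | succ k ih =>
      obtain ⟨hq, -⟩ := ih
      have hmemK := S.proj_mem k
      have hqupd := S.q_update k
      rcases le_or_gt (S.γbar (k+1)) 0 with hle | hgt
      · obtain ⟨hu, hγs⟩ := S.unstick_le k hle
        by_cases hγn : S.γ k = 0
        · have hK : 0 ≤ S.q k + h * S.ubar (k+1) := by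
            simpa [Kset, hγn] using hmemK
          have hqpos : 0 ≤ S.q (k+1) := by rw [hqupd, hu]; exact hK
          refine ⟨hqpos, fun _ => ?_⟩
          set ut := S.u k + h * S.f k with hut
          by_cases hutK : 0 ≤ S.q k + h * ut
          · have hmin := S.proj_min k ut (by simpa [Kset, hγn] using hutK)
            have heq : S.ubar (k+1) = ut := by
              have h0 : |S.ubar (k+1) - ut| ≤ 0 := by simpa [← hut] using hmin
              have := abs_nonpos_iff.mp h0
              linarith [sub_eq_zero.mp this]
            have hlam : S.lam (k+1) = 0 := by
              have := S.lam_def k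
              rw [← hut, heq] at this
              simp at this
              rcases this with h1 | h1
              · exact absurd h1 (ne_of_gt hh)
              · exact h1
            have : S.γ (k+1) = 0 := by
              rw [hγs, S.γbar_def k, hγn, hlam]; ring
            rw [this]; ring
          · push_neg at hutK
            set v : ℝ := -(S.q k) / h with hv
            have hvK : S.q k + h * v = 0 := by rw [hv, mul_comm, div_mul_cancel₀ _ hh.ne']; ring
            have hmin := S.proj_min k v (by
              simp only [Kset, hγn, if_pos rfl, Set.mem_setOf_eq]; exact le_of_eq hvK.symm)
            have hub_ge : v ≤ S.ubar (k+1) := by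
              have : h * v ≤ h * S.ubar (k+1) := by linarith
              exact le_of_mul_le_mul_left this hh
            have hut_lt : ut < v := by
              have : h * ut < h * v := by linarith
              exact lt_of_mul_lt_mul_left this (le_of_lt hh)
            rw [← hut, abs_of_pos (by linarith), abs_of_pos (by linarith)] at hmin
            have hub_eq : S.ubar (k+1) = v := le_antisymm (by linarith) hub_ge
            have : S.q (k+1) = 0 := by rw [hqupd, hu, hub_eq, hvK]
            rw [this]; ring
        · have hK : S.q k + h * S.ubar (k+1) = 0 := by
            simpa [Kset, hγn] using hmemK
          have hq0 : S.q (k+1) = 0 := by rw [hqupd, hu]; exact hK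
          exact ⟨le_of_eq hq0.symm, fun _ => by rw [hq0]; ring⟩
      · obtain ⟨hu, hγs⟩ := S.unstick_gt k hgt
        have hupos : 0 < S.u (k+1) := by rw [hu]; positivity
        refine ⟨?_, fun _ => by rw [hγs]; ring⟩
        rw [hqupd]
        nlinarith
  exact ⟨fun n => ⟨hγ n, (main n).1⟩, fun n _ => (main n).2 ‹_›⟩
end
end
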